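/- Comparison theorem for higher-order differential inequalities: let p ≥ 0 be an integer, T > 0, and let F : ℝ → ℝ be nondecreasing. Suppose ξ, φ : [0,T] → ℝ are (p+1)-times continuously differentiable, with ξ^{(p+1)}(t) ≤ F(ξ(t)) and φ^{(p+1)}(t) ≥ F(φ(t)) for all t ∈ [0,T], and ξ^{(r)}(0) < φ^{(r)}(0) for every 0 ≤ r ≤ p. Then ξ(t) ≤ φ(t) for all t ∈ [0,T]. -/

import Mathlib

/-- Comparison theorem for higher-order differential inequalities: if `F`
is nondecreasing, `ξ` and `φ` are `(p+1)`-times continuously differentiable on `[0,T]` with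
`ξ^{(p+1)}(t) ≤ F(ξ(t))`, `φ^{(p+1)}(t) ≥ F(φ(t))` on `[0,T]`, and `ξ^{(r)}(0) < φ^{(r)}(0)`
for every `0 ≤ r ≤ p`, then `ξ(t) ≤ φ(t)` for all `t ∈ [0,T]`. -/
theorem stmt_7 (p : ℕ) (T : ℝ) (hT : 0 < T) (F : ℝ → ℝ) (hF : Monotone F)
    (ξ φ : ℝ → ℝ)
    (hξ : ContDiffOn ℝ (p + 1) ξ (Set.Icc 0 T))
    (hφ : ContDiffOn ℝ (p + 1) φ (Set.Icc 0 T))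
    (hξineq : ∀ t ∈ Set.Icc (0 : ℝ) T,
      iteratedDerivWithin (p + 1) ξ (Set.Icc 0 T) t ≤ F (ξ t))
    (hφineq : ∀ t ∈ Set.Icc (0 : ℝ) T,
      F (φ t) ≤ iteratedDerivWithin (p + 1) φ (Set.Icc 0 T) t)
    (h0 : ∀ r : ℕ, r ≤ p →
      iteratedDerivWithin r ξ (Set.Icc 0 T) 0 < iteratedDerivWithin r φ (Set.Icc 0 T) 0) :
    ∀ t ∈ Set.Icc (0 : ℝ) T, ξ t ≤ φ t := by
  set s : Set ℝ := Set.Icc 0 T with hs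
  have hsu : UniqueDiffOn ℝ s := uniqueDiffOn_Icc hT
  have hscl : IsClosed s := isClosed_Icc
  set g : ℕ → ℝ → ℝ := fun r t =>
    iteratedDerivWithin r φ s t - iteratedDerivWithin r ξ s t with hg
  -- continuity of g r for r ≤ p+1
  have contG : ∀ r : ℕ, r ≤ p + 1 → ContinuousOn (g r) s := by
    intro r hr
    have hr' : (r : WithTop ℕ∞) ≤ (p + 1 : ℕ) := by exact_mod_cast hr
    exact (hφ.continuousOn_iteratedDerivWithin (by exact_mod_cast hr') hsu).sub
      (hξ.continuousOn_iteratedDerivWithin (by exact_mod_cast hr') hsu)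
  -- differentiability and derivative at interior points
  have hasD : ∀ r : ℕ, r ≤ p → ∀ t ∈ Set.Ioo (0:ℝ) T, HasDerivAt (g r) (g (r+1) t) t := by
    intro r hr t ht
    have hts : t ∈ s := Set.mem_Icc.2 ⟨ht.1.le, ht.2.le⟩
    have hnhds : s ∈ nhds t := Icc_mem_nhds ht.1 ht.2
    have hrlt : (r : WithTop ℕ∞) < (p + 1 : ℕ) := by exact_mod_cast Nat.lt_succ_of_le hr
    have hdφ : DifferentiableAt ℝ (iteratedDerivWithin r φ s) t :=
      ((hφ.differentiableOn_iteratedDerivWithin (by exact_mod_cast hrlt) hsu) t hts).differentiableAt hnhds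
    have hdξ : DifferentiableAt ℝ (iteratedDerivWithin r ξ s) t :=
      ((hξ.differentiableOn_iteratedDerivWithin (by exact_mod_cast hrlt) hsu) t hts).differentiableAt hnhds
    have hdevφ : deriv (iteratedDerivWithin r φ s) t = iteratedDerivWithin (r+1) φ s t := by
      rw [iteratedDerivWithin_succ, derivWithin_of_mem_nhds hnhds]
    have hdevξ : deriv (iteratedDerivWithin r ξ s) t = iteratedDerivWithin (r+1) ξ s t := by
      rw [iteratedDerivWithin_succ, derivWithin_of_mem_nhds hnhds]
    have := (hdφ.hasDerivAt.sub hdξ.hasDerivAt)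
    rw [hdevφ, hdevξ] at this
    exact this
  -- the "bad set"
  set B : Set ℝ := ⋃ r ∈ Finset.range (p+1), (s ∩ (g r) ⁻¹' Set.Iic 0) with hB
  have hBcl : IsClosed B := by
    apply Set.Finite.isClosed_biUnion (Finset.range (p+1)).finite_toSet
    intro r hr
    exact (contG r (le_of_lt (Finset.mem_range.1 (Finset.mem_coe.1 hr)))).preimage_isClosed_of_isClosed
      hscl isClosed_Iic
  have hmemB : ∀ t, t ∈ B ↔ t ∈ s ∧ ∃ r ≤ p, g r t ≤ 0 := by
    intro t
    simp only [hB, Set.mem_iUnion, Finset.mem_range, Set.mem_inter_iff, Set.mem_preimage,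
      Set.mem_Iic, Nat.lt_succ_iff]
    constructor
    · rintro ⟨r, hr, hts, hle⟩; exact ⟨hts, r, hr, hle⟩
    · rintro ⟨hts, r, hr, hle⟩; exact ⟨r, hr, hts, hle⟩
  -- main claim: B is empty
  have hBempty : B = ∅ := by
    by_contra hBne
    have hne : B.Nonempty := Set.nonempty_iff_ne_empty.2 hBne
    have hBsub : B ⊆ s := by
      intro t ht; exact ((hmemB t).1 ht).1
    have hbdd : BddBelow B := ⟨0, fun t ht => (hBsub ht).1⟩
    set t₀ := sInf B with ht₀
    have ht₀B : t₀ ∈ B := hBcl.csInf_mem hne hbdd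
    obtain ⟨ht₀s, r₀, hr₀, hg₀⟩ := (hmemB t₀).1 ht₀B
    have hg0pos : ∀ r ≤ p, 0 < g r 0 := fun r hr => sub_pos.2 (h0 r hr)
    have h0notB : (0:ℝ) ∉ B := by
      intro h
      obtain ⟨_, r, hr, hle⟩ := (hmemB 0).1 h
      exact absurd hle (not_le.2 (hg0pos r hr))
    have ht₀pos : 0 < t₀ := lt_of_le_of_ne ht₀s.1 (fun h => h0notB (h ▸ ht₀B))
    -- points strictly before t₀ in s are good
    have key : ∀ t ∈ s, t < t₀ → ∀ r ≤ p, 0 < g r t := by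
      intro t hts htlt r hr
      by_contra hle
      exact absurd (csInf_le hbdd ((hmemB t).2 ⟨hts, r, hr, not_lt.1 hle⟩)) (not_le.2 htlt)
    -- each g r, r ≤ p, is monotone on Icc 0 t₀
    have hmono : ∀ r ≤ p, MonotoneOn (g r) (Set.Icc 0 t₀) := by
      intro r hr
      have hsub : Set.Icc (0:ℝ) t₀ ⊆ s := Set.Icc_subset_Icc_right ht₀s.2
      apply monotoneOn_of_deriv_nonneg (convex_Icc 0 t₀) ((contG r (Nat.le_succ_of_le hr)).mono hsub)
      · intro t ht
        rw [interior_Icc] at ht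
        have htIoo : t ∈ Set.Ioo (0:ℝ) T := ⟨ht.1, lt_of_lt_of_le ht.2 ht₀s.2⟩
        exact ((hasD r hr t htIoo).differentiableAt).differentiableWithinAt
      · intro t ht
        rw [interior_Icc] at ht
        have htIoo : t ∈ Set.Ioo (0:ℝ) T := ⟨ht.1, lt_of_lt_of_le ht.2 ht₀s.2⟩
        have hts : t ∈ s := Set.mem_Icc.2 ⟨htIoo.1.le, htIoo.2.le⟩
        rw [(hasD r hr t htIoo).deriv]
        rcases lt_or_eq_of_le hr with hlt | heq
        · exact (key t hts ht.2 (r+1) hlt).le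
        · subst heq
          have hξφ : ξ t ≤ φ t := by
            have := key t hts ht.2 0 (Nat.zero_le _)
            simp only [hg, iteratedDerivWithin_zero] at this
            linarith
          have h1 := hξineq t hts
          have h2 := hφineq t hts
          have h3 := hF hξφ
          simp only [hg]
          linarith
    -- hence g r₀ t₀ ≥ g r₀ 0 > 0, contradiction
    have : 0 < g r₀ t₀ :=
      lt_of_lt_of_le (hg0pos r₀ hr₀)
        (hmono r₀ hr₀ (Set.left_mem_Icc.2 ht₀pos.le) (Set.right_mem_Icc.2 ht₀pos.le) ht₀pos.le)
    linarith
  -- conclusion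
  intro t ht
  have : t ∉ B := by rw [hBempty]; exact Set.notMem_empty t
  rw [hmemB] at this
  push_neg at this
  have := this ht 0 (Nat.zero_le _)
  simp only [hg, iteratedDerivWithin_zero] at this
  linarith
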